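/- For every nonnegative integer k and every real z > 0, e^{1/z} - ∑_{m=0}^{k} 1/(m! z^m) = (1/(k!(k+1)!)) ∫_0^∞ F_k(t) t^k e^{-zt} dt, where F_k(t) = ∑_{n=0}^∞ k!(k+1)! t^n / ((n+k)!(n+k+1)!) is the hypergeometric series ₁F₂(1; k+1, k+2; t). -/

import Mathlib

open MeasureTheory Real Finset

/-- The hypergeometric series `₁F₂(1; k+1, k+2; t) = ∑_{n=0}^∞ k!(k+1)! tⁿ / ((n+k)!(n+k+1)!)`. -/
noncomputable def hypF (k : ℕ) (t : ℝ) : ℝ :=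
  ∑' n : ℕ, ((Nat.factorial k : ℝ) * (Nat.factorial (k + 1))) * t ^ n /
    ((Nat.factorial (n + k) : ℝ) * (Nat.factorial (n + k + 1)))

open Set Filter Asymptotics in
lemma aux_integrable (m : ℕ) {z : ℝ} (hz : 0 < z) :
    IntegrableOn (fun t : ℝ => t ^ m * Real.exp (-(z * t))) (Set.Ioi 0) := by
  apply integrable_of_isBigO_exp_neg (b := z / 2) (by linarith)
    (Continuous.continuousOn (by continuity))
  have h1 : (fun t : ℝ => t ^ m) =o[atTop] fun t => Real.exp ((z / 2) * t) :=
    isLittleO_pow_exp_pos_mul_atTop m (by linarith)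
  have h2 := h1.mul_isBigO (isBigO_refl (fun t : ℝ => Real.exp (-(z * t))) atTop)
  apply IsLittleO.isBigO
  apply h2.congr' (by rfl)
  filter_upwards with t
  rw [← Real.exp_add]
  ring_nf

lemma aux_integral (m : ℕ) {z : ℝ} (hz : 0 < z) :
    ∫ t in Set.Ioi (0 : ℝ), t ^ m * Real.exp (-(z * t))
      = (Nat.factorial m : ℝ) / z ^ (m + 1) := by
  have h := Real.integral_rpow_mul_exp_neg_mul_Ioi (a := (m : ℝ) + 1) (by positivity) hz
  rw [show ((m : ℝ) + 1 - 1) = (m : ℝ) by ring] at h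
  rw [Real.Gamma_nat_eq_factorial] at h
  rw [show (1 / z) ^ ((m : ℝ) + 1) = (1 / z) ^ (m + 1) from by
    rw [show ((m : ℝ) + 1) = ((m + 1 : ℕ) : ℝ) by push_cast; ring, Real.rpow_natCast]] at h
  have heq : ∫ t in Set.Ioi (0 : ℝ), t ^ m * Real.exp (-(z * t))
      = ∫ t in Set.Ioi (0 : ℝ), t ^ (m : ℝ) * Real.exp (-(z * t)) := by
    refine setIntegral_congr_fun measurableSet_Ioi (fun t ht => ?_)
    rw [Real.rpow_natCast]
  rw [heq, h]
  rw [div_pow, one_pow, div_mul_eq_mul_div, one_mul]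

theorem exp_inv_tail_integral_repr (k : ℕ) (z : ℝ) (hz : 0 < z) :
    Real.exp (1 / z) - ∑ m ∈ Finset.range (k + 1), 1 / ((Nat.factorial m : ℝ) * z ^ m)
      = (1 / ((Nat.factorial k : ℝ) * (Nat.factorial (k + 1)))) *
        ∫ t in Set.Ioi (0 : ℝ), hypF k t * t ^ k * Real.exp (-(z * t)) := by
  set c : ℝ := (Nat.factorial k : ℝ) * (Nat.factorial (k + 1)) with hc
  have hcpos : 0 < c := by positivity
  set g : ℕ → ℝ → ℝ := fun n t =>
    c / ((Nat.factorial (n + k) : ℝ) * (Nat.factorial (n + k + 1))) *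
      (t ^ (n + k) * Real.exp (-(z * t))) with hg
  -- pointwise identity for the integrand
  have hpt : ∀ t : ℝ, hypF k t * t ^ k * Real.exp (-(z * t)) = ∑' n, g n t := by
    intro t
    rw [hypF, ← tsum_mul_right, ← tsum_mul_right]
    refine tsum_congr fun n => ?_
    have hd : ((Nat.factorial (n + k) : ℝ) * (Nat.factorial (n + k + 1))) ≠ 0 := by positivity
    rw [hg]
    field_simp
    rw [pow_add]
    ring
  -- integrability of each term
  have hint : ∀ n, Integrable (g n) (volume.restrict (Set.Ioi (0 : ℝ))) := fun n =>
    (aux_integrable (n + k) hz).const_mul _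
  -- value of each integral
  have hval : ∀ n, ∫ t in Set.Ioi (0 : ℝ), g n t
      = c / ((Nat.factorial (n + k + 1) : ℝ) * z ^ (n + k + 1)) := by
    intro n
    rw [MeasureTheory.integral_const_mul, aux_integral (n + k) hz]
    have h1 : ((Nat.factorial (n + k) : ℝ)) ≠ 0 := by positivity
    have h2 : ((Nat.factorial (n + k + 1) : ℝ)) ≠ 0 := by positivity
    have h3 : z ^ (n + k + 1) ≠ 0 := by positivity
    field_simp
  -- summability of the integrals of norms
  have hsum0 : Summable fun n : ℕ => c / ((Nat.factorial (n + k + 1) : ℝ) * z ^ (n + k + 1)) := by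
    have hs := Real.summable_pow_div_factorial (1 / z)
    have hs2 : Summable fun n : ℕ => (1 / z) ^ (n + (k + 1)) / (Nat.factorial (n + (k + 1)) : ℝ) :=
      (summable_nat_add_iff (f := fun n => (1 / z) ^ n / (Nat.factorial n : ℝ)) (k + 1)).mpr hs
    have := hs2.mul_left c
    refine this.congr fun n => ?_
    have h2 : ((Nat.factorial (n + k + 1) : ℝ)) ≠ 0 := by positivity
    have h3 : z ^ (n + k + 1) ≠ 0 := by positivity
    show c * ((1 / z) ^ (n + (k + 1)) / (Nat.factorial (n + (k + 1)) : ℝ)) = _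
    rw [div_pow, one_pow, show n + (k + 1) = n + k + 1 by ring]
    field_simp
  have hnorm : ∀ n, ∫ t in Set.Ioi (0 : ℝ), ‖g n t‖
      = c / ((Nat.factorial (n + k + 1) : ℝ) * z ^ (n + k + 1)) := by
    intro n
    rw [← hval n]
    refine setIntegral_congr_fun measurableSet_Ioi (fun t ht => ?_)
    have ht0 : (0 : ℝ) < t := ht
    rw [Real.norm_of_nonneg]
    positivity
  have hsum : Summable fun n : ℕ => ∫ t in Set.Ioi (0 : ℝ), ‖g n t‖ := by
    refine hsum0.congr fun n => ?_
    rw [hnorm n]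
  -- swap integral and sum
  have hswap : ∫ t in Set.Ioi (0 : ℝ), hypF k t * t ^ k * Real.exp (-(z * t))
      = ∑' n : ℕ, c / ((Nat.factorial (n + k + 1) : ℝ) * z ^ (n + k + 1)) := by
    have := MeasureTheory.integral_tsum_of_summable_integral_norm hint hsum
    rw [show (fun t : ℝ => hypF k t * t ^ k * Real.exp (-(z * t)))
        = fun t => ∑' n, g n t from funext hpt]
    rw [← this]
    exact tsum_congr hval
  rw [hswap]
  -- LHS: exp tail
  have hexp : Real.exp (1 / z) = ∑' n : ℕ, (1 / z) ^ n / (Nat.factorial n : ℝ) := by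
    rw [Real.exp_eq_exp_ℝ, NormedSpace.exp_eq_tsum_div]
  have hsummf : Summable fun n : ℕ => (1 / z) ^ n / (Nat.factorial n : ℝ) :=
    Real.summable_pow_div_factorial (1 / z)
  have htail := Summable.sum_add_tsum_nat_add (k + 1) hsummf
  have hpartial : ∑ m ∈ Finset.range (k + 1), (1 / z) ^ m / (Nat.factorial m : ℝ)
      = ∑ m ∈ Finset.range (k + 1), 1 / ((Nat.factorial m : ℝ) * z ^ m) := by
    refine Finset.sum_congr rfl fun m _ => ?_
    rw [div_pow, one_pow]
    have : ((Nat.factorial m : ℝ)) ≠ 0 := by positivity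
    have : z ^ m ≠ 0 := by positivity
    field_simp
  rw [hexp, ← htail, hpartial]
  rw [add_comm, add_sub_assoc, sub_self, add_zero]
  rw [← tsum_mul_left]
  refine tsum_congr fun n => ?_
  have h2 : ((Nat.factorial (n + k + 1) : ℝ)) ≠ 0 := by positivity
  have h3 : z ^ (n + (k + 1)) ≠ 0 := by positivity
  show (1 / z) ^ (n + (k + 1)) / (Nat.factorial (n + (k + 1)) : ℝ)
      = 1 / c * (c / ((Nat.factorial (n + k + 1) : ℝ) * z ^ (n + k + 1)))
  rw [div_pow, one_pow, show n + (k + 1) = n + k + 1 by ring]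
  field_simp
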